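/- With the notation and hypotheses of the LMB fusion setting (LMB densities π_i with parameters {(r_i(ℓ), p_i(·, ℓ))}, 0 < r_i(ℓ) < 1, weights ω_i ≥ 0 summing to 1, η(ℓ) = ∫_X ∏_{i∈I} p_i(x, ℓ)^{ω_i} dμ(x) positive and finite, q̃(ℓ) = ∏_{i∈I} (1 − r_i(ℓ))^{ω_i}, r̃(ℓ) = η(ℓ) ∏_{i∈I} r_i(ℓ)^{ω_i}), the set integral of the weighted geometric product equals ∑_{L ⊆ 𝕃} ∫_{X^L} ∏_{i∈I} π_i(L, x)^{ω_i} dμ^L(x) = ∏_{ℓ∈𝕃} (q̃(ℓ) + r̃(ℓ)). -/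

import Mathlib

open MeasureTheory

/-- Set integral of the weighted geometric product of LMB densities:
`∑_{L ⊆ 𝕃} ∫_{X^L} ∏ i, π_i(L,x)^{ω i} dμ^L = ∏_{ℓ∈𝕃} (q̃(ℓ) + r̃(ℓ))`. -/
theorem lmb_geometric_product_set_integral
    {X : Type*} [MeasurableSpace X] (μ : Measure X) [SigmaFinite μ]
    {𝕃 : Type*} [Fintype 𝕃] [DecidableEq 𝕃]
    {I : Type*} [Fintype I]
    (r : I → 𝕃 → ℝ) (p : I → X → 𝕃 → ℝ)
    (hr : ∀ i ℓ, 0 < r i ℓ ∧ r i ℓ < 1)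
    (hpmeas : ∀ i ℓ, Measurable (fun x => p i x ℓ))
    (hpnn : ∀ i x ℓ, 0 ≤ p i x ℓ)
    (hpnorm : ∀ i ℓ, ∫ x, p i x ℓ ∂μ = 1)
    (ω : I → ℝ) (hωnn : ∀ i, 0 ≤ ω i) (hωsum : ∑ i, ω i = 1)
    (η : 𝕃 → ℝ)
    (hη : ∀ ℓ, η ℓ = ∫ x, ∏ i, p i x ℓ ^ ω i ∂μ)
    (hηpos : ∀ ℓ, 0 < η ℓ)
    (hηfin : ∀ ℓ, Integrable (fun x => ∏ i, p i x ℓ ^ ω i) μ)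
    (qt rt : 𝕃 → ℝ)
    (hqt : ∀ ℓ, qt ℓ = ∏ i, (1 - r i ℓ) ^ ω i)
    (hrt : ∀ ℓ, rt ℓ = η ℓ * ∏ i, r i ℓ ^ ω i) :
    ∑ L : Finset 𝕃,
      ∫ x, ∏ i, ((∏ ℓ ∈ Lᶜ, (1 - r i ℓ)) * ∏ ℓ : L, r i ℓ * p i (x ℓ) ℓ) ^ ω i
        ∂(Measure.pi fun _ : L => μ) =
    ∏ ℓ : 𝕃, (qt ℓ + rt ℓ) := by
  letI : MeasureSpace X := ⟨μ⟩
  have hvol : (volume : Measure X) = μ := rfl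
  -- compute the integral for each L
  have hterm : ∀ L : Finset 𝕃,
      (∫ x, ∏ i, ((∏ ℓ ∈ Lᶜ, (1 - r i ℓ)) * ∏ ℓ : L, r i ℓ * p i (x ℓ) ℓ) ^ ω i
        ∂(Measure.pi fun _ : L => μ)) =
      (∏ ℓ ∈ Lᶜ, qt ℓ) * ∏ ℓ : L, rt ℓ := by
    intro L
    have key : ∀ x : L → X,
        ∏ i, ((∏ ℓ ∈ Lᶜ, (1 - r i ℓ)) * ∏ ℓ : L, r i ℓ * p i (x ℓ) ℓ) ^ ω i =
        (∏ ℓ ∈ Lᶜ, qt ℓ) *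
          ∏ ℓ : L, ((∏ i, r i (ℓ : 𝕃) ^ ω i) * ∏ i, p i (x ℓ) ℓ ^ ω i) := by
      intro x
      have step : ∀ i : I,
          ((∏ ℓ ∈ Lᶜ, (1 - r i ℓ)) * ∏ ℓ : L, r i ℓ * p i (x ℓ) ℓ) ^ ω i =
          (∏ ℓ ∈ Lᶜ, (1 - r i ℓ) ^ ω i) *
            ∏ ℓ : L, (r i (ℓ : 𝕃) ^ ω i * p i (x ℓ) ℓ ^ ω i) := by
        intro i
        have h1 : ∀ ℓ ∈ (Lᶜ : Finset 𝕃), 0 ≤ 1 - r i ℓ := fun ℓ _ =>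
          le_of_lt (by linarith [(hr i ℓ).2])
        have h2 : ∀ ℓ : L, 0 ≤ r i (ℓ : 𝕃) * p i (x ℓ) ℓ := fun ℓ =>
          mul_nonneg (hr i ℓ).1.le (hpnn i _ _)
        rw [Real.mul_rpow (Finset.prod_nonneg h1)
            (Finset.prod_nonneg fun ℓ _ => h2 ℓ),
          ← Real.finset_prod_rpow _ _ h1 (ω i),
          ← Real.finset_prod_rpow _ _ (fun ℓ _ => h2 ℓ) (ω i)]
        congr 1
        refine Finset.prod_congr rfl fun ℓ _ => ?_
        exact Real.mul_rpow (hr i ℓ).1.le (hpnn i _ _)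
      rw [Finset.prod_congr rfl fun i _ => step i, Finset.prod_mul_distrib]
      congr 1
      · rw [Finset.prod_comm]
        exact Finset.prod_congr rfl fun ℓ _ => (hqt ℓ).symm
      · rw [Finset.prod_comm]
        refine Finset.prod_congr rfl fun ℓ _ => ?_
        rw [Finset.prod_mul_distrib]
    simp_rw [key]
    rw [integral_const_mul _ _]
    congr 1
    have := MeasureTheory.integral_fintype_prod_eq_prod (𝕜 := ℝ) (μ := fun _ => (volume : Measure X))
      (fun ℓ x => (∏ i, r i (ℓ : 𝕃) ^ ω i) * ∏ i, p i x (ℓ : 𝕃) ^ ω i)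
      (E := fun _ : L => X)
    rw [show (Measure.pi fun _ : L => μ) = (volume : Measure (L → X)) by
        rw [MeasureTheory.volume_pi]; rfl]
    rw [← MeasureTheory.volume_pi] at this
    rw [this]
    refine Finset.prod_congr rfl fun ℓ _ => ?_
    rw [hvol, integral_const_mul _ _, hrt, ← hη, mul_comm]
  simp_rw [hterm]
  have := Finset.prod_add rt qt (Finset.univ : Finset 𝕃)
  rw [show (∏ ℓ : 𝕃, (qt ℓ + rt ℓ)) = ∏ ℓ : 𝕃, (rt ℓ + qt ℓ) from
      Finset.prod_congr rfl fun ℓ _ => add_comm _ _, this, Finset.powerset_univ]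
  refine Finset.sum_congr rfl fun L _ => ?_
  rw [mul_comm, Finset.prod_coe_sort L rt, ← Finset.compl_eq_univ_sdiff]
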